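/- Let Z be a type, n ≥ 1, z₁, …, zₙ, z₁' ∈ Z, and let f : ℝ^d × Z → ℝ be such that f(·, z) is differentiable with ‖∇_w f(w, z)‖ ≤ L₀ for all w ∈ ℝ^d and z ∈ Z. Define the empirical risks F(w) = (1/n)∑_{i=1}^n f(w, z_i) and F'(w) = (1/n)( f(w, z₁') + ∑_{i=2}^n f(w, z_i) ), which differ only in the first sample. Let C ⊆ ℝ^d be a convex set on which F is (λ/2)-strongly convex, i.e. F(y) ≥ F(x) + ⟨∇F(x), y − x⟩ + (λ/4)‖y − x‖² for all x, y ∈ C, with λ > 0. If w₁ ∈ C satisfies ∇F(w₁) = 0 and w₂ ∈ C satisfies ∇F'(w₂) = 0, then ‖w₁ − w₂‖ ≤ 8L₀/(nλ). -/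

import Mathlib

open scoped RealInnerProductSpace

lemma grad_avg {d : ℕ} {ι : Type*} (s : Finset ι) (c : ℝ)
    (f : ι → EuclideanSpace ℝ (Fin d) → ℝ) (g : ι → EuclideanSpace ℝ (Fin d))
    (w : EuclideanSpace ℝ (Fin d))
    (hg : ∀ i ∈ s, HasGradientAt (f i) (g i) w) :
    HasGradientAt (fun w' => c * ∑ i ∈ s, f i w') (c • ∑ i ∈ s, g i) w := by
  rw [hasGradientAt_iff_hasFDerivAt]
  have h1 : HasFDerivAt (fun w' => ∑ i ∈ s, f i w')
      (∑ i ∈ s, (InnerProductSpace.toDual ℝ _ (g i) : _ →L[ℝ] ℝ)) w :=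
    HasFDerivAt.fun_sum fun i hi => (hasGradientAt_iff_hasFDerivAt.1 (hg i hi))
  have h2 := h1.const_mul c
  convert h2 using 1
  · rfl
  · simp [map_smul, map_sum, smul_smul]

/-- Two critical points, on a set where the empirical risk is strongly convex, of
empirical risks built from samples differing in exactly one data point are at
distance at most `8 L₀ / (n λ)`. -/
theorem critical_points_of_neighboring_samples_close
    {d : ℕ} {Z : Type*} {n : ℕ} (hn : 0 < n)
    (z : Fin n → Z) (z₁' : Z)
    (f : EuclideanSpace ℝ (Fin d) → Z → ℝ)
    (g : EuclideanSpace ℝ (Fin d) → Z → EuclideanSpace ℝ (Fin d))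
    (L₀ : ℝ)
    (hg : ∀ (w : EuclideanSpace ℝ (Fin d)) (zz : Z),
      HasGradientAt (fun w' => f w' zz) (g w zz) w)
    (hL₀ : ∀ (w : EuclideanSpace ℝ (Fin d)) (zz : Z), ‖g w zz‖ ≤ L₀)
    (F F' : EuclideanSpace ℝ (Fin d) → ℝ)
    (hF : F = fun w => (n : ℝ)⁻¹ * ∑ i : Fin n, f w (z i))
    (hF' : F' = fun w => (n : ℝ)⁻¹ * ∑ i : Fin n, f w (Function.update z ⟨0, hn⟩ z₁' i))
    (GF GF' : EuclideanSpace ℝ (Fin d) → EuclideanSpace ℝ (Fin d))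
    (hGF : ∀ w, HasGradientAt F (GF w) w)
    (hGF' : ∀ w, HasGradientAt F' (GF' w) w)
    (C : Set (EuclideanSpace ℝ (Fin d))) (hC : Convex ℝ C)
    (lam : ℝ) (hlam : 0 < lam)
    (hsc : ∀ x ∈ C, ∀ y ∈ C, F x + ⟪GF x, y - x⟫ + lam / 4 * ‖y - x‖ ^ 2 ≤ F y)
    (w₁ : EuclideanSpace ℝ (Fin d)) (hw₁ : w₁ ∈ C) (hgw₁ : GF w₁ = 0)
    (w₂ : EuclideanSpace ℝ (Fin d)) (hw₂ : w₂ ∈ C) (hgw₂ : GF' w₂ = 0) :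
    ‖w₁ - w₂‖ ≤ 8 * L₀ / (n * lam) := by
  have hn' : (0:ℝ) < n := by exact_mod_cast hn
  have hL₀0 : 0 ≤ L₀ := le_trans (norm_nonneg _) (hL₀ 0 z₁')
  -- compute GF w₂
  have hGw2 : GF w₂ = (n : ℝ)⁻¹ • ∑ i : Fin n, g w₂ (z i) := by
    refine (hGF w₂).unique ?_
    rw [hF]
    exact grad_avg Finset.univ _ (fun i w' => f w' (z i)) (fun i => g w₂ (z i)) w₂
      (fun i _ => hg w₂ (z i))
  have hGw2' : GF' w₂ = (n : ℝ)⁻¹ • ∑ i : Fin n,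
      g w₂ (Function.update z ⟨0, hn⟩ z₁' i) := by
    refine (hGF' w₂).unique ?_
    rw [hF']
    exact grad_avg Finset.univ _ (fun i w' => f w' (Function.update z ⟨0, hn⟩ z₁' i))
      (fun i => g w₂ (Function.update z ⟨0, hn⟩ z₁' i)) w₂ (fun i _ => hg w₂ _)
  -- GF w₂ = GF w₂ - GF' w₂ = (1/n)(g w₂ (z 0) - g w₂ z₁')
  have hdiff : GF w₂ = (n : ℝ)⁻¹ • (g w₂ (z ⟨0, hn⟩) - g w₂ z₁') := by
    set i0 : Fin n := ⟨0, hn⟩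
    have h1 : (∑ i : Fin n, g w₂ (z i)) -
        (∑ i : Fin n, g w₂ (Function.update z i0 z₁' i))
        = g w₂ (z i0) - g w₂ z₁' := by
      have e1 : ∑ i : Fin n, g w₂ (z i)
          = (∑ i ∈ Finset.univ \ {i0}, g w₂ (z i)) + g w₂ (z i0) :=
        Finset.sum_eq_sum_sdiff_singleton_add (Finset.mem_univ i0) _
      have e2 : ∑ i : Fin n, g w₂ (Function.update z i0 z₁' i)
          = (∑ i ∈ Finset.univ \ {i0}, g w₂ (Function.update z i0 z₁' i))
            + g w₂ z₁' := by
        have := Finset.sum_eq_sum_sdiff_singleton_add (Finset.mem_univ i0)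
          (fun i => g w₂ (Function.update z i0 z₁' i))
        simpa using this
      have e3 : (∑ i ∈ Finset.univ \ {i0}, g w₂ (Function.update z i0 z₁' i))
          = ∑ i ∈ Finset.univ \ {i0}, g w₂ (z i) := by
        refine Finset.sum_congr rfl fun i hi => ?_
        have : i ≠ i0 := by
          simp only [Finset.mem_sdiff, Finset.mem_singleton] at hi
          exact hi.2
        rw [Function.update_of_ne this]
      rw [e1, e2, e3]
      abel
    calc GF w₂ = GF w₂ - GF' w₂ := by rw [hgw₂, sub_zero]
      _ = (n : ℝ)⁻¹ • (g w₂ (z ⟨0, hn⟩) - g w₂ z₁') := by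
          rw [hGw2, hGw2', ← smul_sub, h1]
  have hnorm : ‖GF w₂‖ ≤ 2 * L₀ / n := by
    rw [hdiff, norm_smul]
    have : ‖g w₂ (z ⟨0, hn⟩) - g w₂ z₁'‖ ≤ 2 * L₀ := by
      calc ‖g w₂ (z ⟨0, hn⟩) - g w₂ z₁'‖ ≤ ‖g w₂ (z ⟨0, hn⟩)‖ + ‖g w₂ z₁'‖ :=
        norm_sub_le _ _
        _ ≤ 2 * L₀ := by linarith [hL₀ w₂ (z ⟨0, hn⟩), hL₀ w₂ z₁']
    rw [Real.norm_eq_abs, abs_of_nonneg (by positivity)]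
    calc (n:ℝ)⁻¹ * ‖g w₂ (z ⟨0, hn⟩) - g w₂ z₁'‖ ≤ (n:ℝ)⁻¹ * (2 * L₀) :=
        mul_le_mul_of_nonneg_left this (by positivity)
      _ = 2 * L₀ / n := by ring
  -- strong convexity both directions
  have h1 := hsc w₁ hw₁ w₂ hw₂
  have h2 := hsc w₂ hw₂ w₁ hw₁
  simp only [hgw₁, inner_zero_left] at h1
  have hnn : ‖w₂ - w₁‖ = ‖w₁ - w₂‖ := norm_sub_rev _ _
  have hnn2 : ‖w₂ - w₁‖ ^ 2 = ‖w₁ - w₂‖ ^ 2 := by rw [hnn]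
  have hkey : lam / 2 * ‖w₁ - w₂‖ ^ 2 ≤ -⟪GF w₂, w₁ - w₂⟫ := by
    rw [hnn2] at h1
    linarith [h1, h2]
  have hcs : -⟪GF w₂, w₁ - w₂⟫ ≤ ‖GF w₂‖ * ‖w₁ - w₂‖ := by
    have := abs_real_inner_le_norm (GF w₂) (w₁ - w₂)
    have h := neg_abs_le ⟪GF w₂, w₁ - w₂⟫
    linarith
  have hfinal : lam / 2 * ‖w₁ - w₂‖ ^ 2 ≤ (2 * L₀ / n) * ‖w₁ - w₂‖ := by
    calc lam / 2 * ‖w₁ - w₂‖ ^ 2 ≤ -⟪GF w₂, w₁ - w₂⟫ := hkey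
      _ ≤ ‖GF w₂‖ * ‖w₁ - w₂‖ := hcs
      _ ≤ (2 * L₀ / n) * ‖w₁ - w₂‖ :=
          mul_le_mul_of_nonneg_right hnorm (norm_nonneg _)
  rcases eq_or_lt_of_le (norm_nonneg (w₁ - w₂)) with h0 | h0
  · rw [← h0]; positivity
  · have hB : (n : ℝ) * ‖GF w₂‖ ≤ 2 * L₀ := by
      have := mul_le_mul_of_nonneg_left hnorm (le_of_lt hn')
      calc (n:ℝ) * ‖GF w₂‖ ≤ (n:ℝ) * (2 * L₀ / n) := this
        _ = 2 * L₀ := by field_simp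
    have hXB : lam * ‖w₁ - w₂‖ ≤ 2 * ‖GF w₂‖ := by
      nlinarith [hfinal, h0, mul_le_mul_of_nonneg_right hnorm (norm_nonneg (w₁ - w₂))]
    have : ‖w₁ - w₂‖ ≤ 4 * L₀ / (n * lam) := by
      rw [le_div_iff₀ (by positivity)]
      nlinarith [mul_le_mul_of_nonneg_left hXB (le_of_lt hn'), hB]
    calc ‖w₁ - w₂‖ ≤ 4 * L₀ / (n * lam) := this
      _ ≤ 8 * L₀ / (n * lam) := by
        gcongr
        linarith
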